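/- The function u_ε(x) = (ε² + |x|²)/ε on ℝ² satisfies, up to a positive constant multiplier, the integral equation u(x) = ∫_{ℝ²} |x−y|² u(y)^{−3} dy. More precisely, there exists a constant c > 0 such that for all x ∈ ℝ², ∫_{ℝ²} |x−y|² u_ε(y)^{−3} dy = c · u_ε(x). -/

import Mathlib

open MeasureTheory Real Filter

section Helpers

private lemma stmt0_radial1 {ε : ℝ} (hε : 0 < ε) :
    ∫ r in Set.Ioi (0:ℝ), r * ((ε^2 + r^2)^3)⁻¹ = (4*ε^4)⁻¹ := by
  set F : ℝ → ℝ := fun r => -(4*(ε^2+r^2)^2)⁻¹ with hF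
  have hd : ∀ r : ℝ, HasDerivAt F (r * ((ε^2+r^2)^3)⁻¹) r := by
    intro r
    have h1 : HasDerivAt (fun r : ℝ => ε^2 + r^2) (2*r) r := by
      simpa using (hasDerivAt_pow 2 r).const_add (ε^2)
    have h2 := ((h1.pow 2).const_mul (4:ℝ))
    have h3 := (h2.inv (by simp only [Pi.pow_apply, Pi.add_apply]; positivity)).neg
    refine h3.congr_deriv ?_
    have hpos : (0:ℝ) < ε^2 + r^2 := by positivity
    simp only [Pi.pow_apply]
    field_simp
    ring
  have hlim : Tendsto F atTop (nhds 0) := by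
    have h1 : Tendsto (fun r : ℝ => ε^2 + r^2) atTop atTop :=
      tendsto_atTop_add_const_left _ _ (tendsto_pow_atTop two_ne_zero)
    have h2 : Tendsto (fun r : ℝ => 4*(ε^2+r^2)^2) atTop atTop :=
      ((tendsto_pow_atTop two_ne_zero).comp h1).const_mul_atTop (by norm_num)
    have h3 := h2.inv_tendsto_atTop.neg
    simpa [hF] using h3
  have h := integral_Ioi_of_hasDerivAt_of_nonneg' (g := F)
      (fun x _ => hd x) (fun x hx => by
        have : (0:ℝ) < x := hx
        positivity) hlim
  rw [h, hF]
  norm_num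
  ring

private lemma stmt0_radial2 {ε : ℝ} (hε : 0 < ε) :
    ∫ r in Set.Ioi (0:ℝ), r * (r^2 * ((ε^2 + r^2)^3)⁻¹) = (4*ε^2)⁻¹ := by
  set F : ℝ → ℝ := fun r => -(2*(ε^2+r^2))⁻¹ + ε^2*(4*(ε^2+r^2)^2)⁻¹ with hF
  have hd : ∀ r : ℝ, HasDerivAt F (r * (r^2 * ((ε^2+r^2)^3)⁻¹)) r := by
    intro r
    have h1 : HasDerivAt (fun r : ℝ => ε^2 + r^2) (2*r) r := by
      simpa using (hasDerivAt_pow 2 r).const_add (ε^2)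
    have h2 := ((h1.const_mul (2:ℝ)).inv (by positivity)).neg
    have h3 := (((h1.pow 2).const_mul (4:ℝ)).inv (by simp only [Pi.pow_apply, Pi.add_apply]; positivity)).const_mul (ε^2)
    have h4 := h2.add h3
    refine h4.congr_deriv ?_
    have hpos : (0:ℝ) < ε^2 + r^2 := by positivity
    simp only [Pi.pow_apply]
    field_simp
    ring
  have hlim : Tendsto F atTop (nhds 0) := by
    have h1 : Tendsto (fun r : ℝ => ε^2 + r^2) atTop atTop :=
      tendsto_atTop_add_const_left _ _ (tendsto_pow_atTop two_ne_zero)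
    have h2 : Tendsto (fun r : ℝ => 4*(ε^2+r^2)^2) atTop atTop :=
      ((tendsto_pow_atTop two_ne_zero).comp h1).const_mul_atTop (by norm_num)
    have h3 : Tendsto (fun r : ℝ => 2*(ε^2+r^2)) atTop atTop :=
      h1.const_mul_atTop (by norm_num)
    have h5 := (h3.inv_tendsto_atTop.neg).add (h2.inv_tendsto_atTop.const_mul (ε^2))
    simpa [hF] using h5
  have h := integral_Ioi_of_hasDerivAt_of_nonneg' (g := F)
      (fun x _ => hd x) (fun x hx => by
        have : (0:ℝ) < x := hx
        positivity) hlim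
  rw [h, hF]
  have hε2 : (ε:ℝ)^2 ≠ 0 := by positivity
  norm_num
  field_simp
  ring

private lemma stmt0_int_aux {ε : ℝ} (hε : 0 < ε) {k : ℕ} (hk : k ≤ 2) :
    Integrable (fun y : EuclideanSpace ℝ (Fin 2) => ‖y‖^k * ((ε^2+‖y‖^2)^3)⁻¹) := by
  have hcont : Continuous (fun y : EuclideanSpace ℝ (Fin 2) => ‖y‖^k * ((ε^2+‖y‖^2)^3)⁻¹) :=
    (continuous_norm.pow k).mul
      (((continuous_const.add (continuous_norm.pow 2)).pow 3).inv₀ (fun y => by simp only [Pi.pow_apply, Pi.add_apply]; positivity))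
  set m := min (ε^2) 1 with hm
  have hm0 : 0 < m := lt_min (by positivity) one_pos
  have hint : Integrable (fun y : EuclideanSpace ℝ (Fin 2) => (1 + ‖y‖) ^ (-(4:ℝ))) volume :=
    integrable_one_add_norm (by rw [finrank_euclideanSpace_fin]; norm_num)
  refine (hint.const_mul ((2/m)^3)).mono' hcont.aestronglyMeasurable
    (Eventually.of_forall fun y => ?_)
  set r := ‖y‖ with hr
  have hr0 : 0 ≤ r := norm_nonneg y
  have hpos : (0:ℝ) < ε^2 + r^2 := by positivity
  have hrp : (0:ℝ) < 1 + r := by linarith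
  have hrw : (1 + r) ^ (-(4:ℝ)) = ((1+r)^(4:ℕ))⁻¹ := by
    rw [Real.rpow_neg hrp.le, show ((4:ℝ)) = ((4:ℕ):ℝ) by norm_num, Real.rpow_natCast]
  rw [Real.norm_eq_abs, abs_of_nonneg (by positivity), hrw]
  have hr1 : r^k ≤ (1+r)^2 :=
    (pow_le_pow_left₀ hr0 (by linarith) k).trans (pow_le_pow_right₀ (by linarith) hk)
  have hr2 : m/2*(1+r)^2 ≤ ε^2+r^2 := by
    have h1 : m ≤ ε^2 := min_le_left _ _
    have h2 : m ≤ 1 := min_le_right _ _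
    nlinarith [sq_nonneg (1-r), sq_nonneg r]
  have h6 : (m/2*(1+r)^2)^3 ≤ (ε^2+r^2)^3 := pow_le_pow_left₀ (by positivity) hr2 3
  calc r^k * ((ε^2+r^2)^3)⁻¹
      ≤ (1+r)^2 * ((m/2*(1+r)^2)^3)⁻¹ := by
        apply mul_le_mul hr1 _ (by positivity) (by positivity)
        exact inv_anti₀ (by positivity) h6
    _ = (2/m)^3 * ((1+r)^(4:ℕ))⁻¹ := by
        field_simp

private lemma stmt0_ball_vol :
    (volume (Metric.ball (0:EuclideanSpace ℝ (Fin 2)) 1)).toReal = π := by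
  rw [EuclideanSpace.volume_ball]
  rw [Fintype.card_fin]
  rw [show ((2:ℕ):ℝ)/2 + 1 = 2 by norm_num, Real.Gamma_two]
  simp [sq_sqrt pi_pos.le, ENNReal.toReal_ofReal pi_pos.le]

end Helpers

theorem stmt0 (ε : ℝ) (hε : 0 < ε) :
    ∃ c : ℝ, 0 < c ∧ ∀ x : EuclideanSpace ℝ (Fin 2),
      Integrable (fun y : EuclideanSpace ℝ (Fin 2) =>
        ‖x - y‖ ^ 2 * ((ε ^ 2 + ‖y‖ ^ 2) / ε) ^ (-3 : ℤ)) ∧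
      ∫ y : EuclideanSpace ℝ (Fin 2),
          ‖x - y‖ ^ 2 * ((ε ^ 2 + ‖y‖ ^ 2) / ε) ^ (-3 : ℤ)
        = c * ((ε ^ 2 + ‖x‖ ^ 2) / ε) := by
  have h0 : ∀ y : EuclideanSpace ℝ (Fin 2), (0:ℝ) < ε^2 + ‖y‖^2 := fun y => by positivity
  have key : ∀ y : EuclideanSpace ℝ (Fin 2),
      ((ε^2 + ‖y‖^2)/ε)^(-3:ℤ) = ε^3 * ((ε^2+‖y‖^2)^3)⁻¹ := by
    intro y
    have := h0 y
    rw [zpow_neg, show (3:ℤ) = ((3:ℕ):ℤ) by norm_num, zpow_natCast, div_pow, inv_div,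
      div_eq_mul_inv]
  set w : EuclideanSpace ℝ (Fin 2) → ℝ := fun y => ((ε^2+‖y‖^2)^3)⁻¹ with hwdef
  have wcont : Continuous w :=
    ((continuous_const.add (continuous_norm.pow 2)).pow 3).inv₀ (fun y => by simp only [Pi.pow_apply, Pi.add_apply]; positivity)
  have i0 : Integrable (fun y : EuclideanSpace ℝ (Fin 2) => w y) := by
    simpa using stmt0_int_aux hε (k := 0) (by norm_num)
  have i1 : Integrable (fun y : EuclideanSpace ℝ (Fin 2) => ‖y‖ * w y) := by
    simpa using stmt0_int_aux hε (k := 1) (by norm_num)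
  have i2 : Integrable (fun y : EuclideanSpace ℝ (Fin 2) => ‖y‖^2 * w y) :=
    stmt0_int_aux hε le_rfl
  -- value of the radial integrals
  have hA : ∫ y : EuclideanSpace ℝ (Fin 2), w y = π * (2*ε^4)⁻¹ := by
    have h := integral_fun_norm_addHaar (volume : Measure (EuclideanSpace ℝ (Fin 2)))
      (fun r : ℝ => ((ε^2+r^2)^3)⁻¹)
    simp only [finrank_euclideanSpace_fin, measureReal_def, stmt0_ball_vol, smul_eq_mul, nsmul_eq_mul,
      show (2:ℕ)-1 = 1 from rfl, pow_one, Nat.cast_ofNat] at h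
    rw [hwdef]
    rw [h, stmt0_radial1 hε]
    field_simp
    ring
  have hB : ∫ y : EuclideanSpace ℝ (Fin 2), ‖y‖^2 * w y = π * (2*ε^2)⁻¹ := by
    have h := integral_fun_norm_addHaar (volume : Measure (EuclideanSpace ℝ (Fin 2)))
      (fun r : ℝ => r^2 * ((ε^2+r^2)^3)⁻¹)
    simp only [finrank_euclideanSpace_fin, measureReal_def, stmt0_ball_vol, smul_eq_mul, nsmul_eq_mul,
      show (2:ℕ)-1 = 1 from rfl, pow_one, Nat.cast_ofNat] at h
    rw [hwdef]
    rw [h, stmt0_radial2 hε]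
    field_simp
    ring
  refine ⟨π/2, by positivity, fun x => ?_⟩
  have icont : Continuous (fun y : EuclideanSpace ℝ (Fin 2) => (inner ℝ x y : ℝ) * w y) :=
    ((continuous_const.inner continuous_id).mul wcont)
  have icross : Integrable (fun y : EuclideanSpace ℝ (Fin 2) => (inner ℝ x y : ℝ) * w y) := by
    refine (i1.const_mul ‖x‖).mono' icont.aestronglyMeasurable
      (Eventually.of_forall fun y => ?_)
    have hw0 : 0 ≤ w y := by positivity
    rw [Real.norm_eq_abs, abs_mul, abs_of_nonneg hw0]
    have := abs_real_inner_le_norm x y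
    calc |(inner ℝ x y : ℝ)| * w y ≤ (‖x‖ * ‖y‖) * w y :=
          mul_le_mul_of_nonneg_right this hw0
      _ = ‖x‖ * (‖y‖ * w y) := by ring
  have hC : ∫ y : EuclideanSpace ℝ (Fin 2), (inner ℝ x y : ℝ) * w y = 0 := by
    have h := MeasureTheory.integral_neg_eq_self
      (fun y : EuclideanSpace ℝ (Fin 2) => (inner ℝ x y : ℝ) * w y) volume
    simp only [hwdef, inner_neg_neg, inner_neg_right, norm_neg, neg_mul] at h
    rw [integral_neg] at h
    linarith
  have hsplit : (fun y : EuclideanSpace ℝ (Fin 2) =>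
        ‖x - y‖ ^ 2 * ((ε ^ 2 + ‖y‖ ^ 2) / ε) ^ (-3 : ℤ)) =
      fun y => ε^3 * (‖x‖^2 * w y - 2*((inner ℝ x y : ℝ) * w y) + ‖y‖^2 * w y) := by
    funext y
    rw [key y, @norm_sub_sq_real (EuclideanSpace ℝ (Fin 2)) _ _ x y]
    ring
  have iexp : Integrable (fun y : EuclideanSpace ℝ (Fin 2) =>
      ‖x‖^2 * w y - 2*((inner ℝ x y : ℝ) * w y) + ‖y‖^2 * w y) :=
    ((i0.const_mul _).sub (icross.const_mul 2)).add i2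
  constructor
  · rw [hsplit]; exact iexp.const_mul _
  have hfg : Integrable (fun y : EuclideanSpace ℝ (Fin 2) =>
      ‖x‖^2 * w y - 2*((inner ℝ x y : ℝ) * w y)) volume := by
    exact (i0.const_mul (‖x‖^2)).sub (icross.const_mul 2)
  have e1 : ∫ y : EuclideanSpace ℝ (Fin 2),
        (‖x‖^2 * w y - 2*((inner ℝ x y : ℝ) * w y) + ‖y‖^2 * w y)
      = (∫ y : EuclideanSpace ℝ (Fin 2), (‖x‖^2 * w y - 2*((inner ℝ x y : ℝ) * w y)))
        + ∫ y : EuclideanSpace ℝ (Fin 2), ‖y‖^2 * w y := integral_add hfg i2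
  have e2 : ∫ y : EuclideanSpace ℝ (Fin 2), (‖x‖^2 * w y - 2*((inner ℝ x y : ℝ) * w y))
      = (∫ y : EuclideanSpace ℝ (Fin 2), ‖x‖^2 * w y)
        - ∫ y : EuclideanSpace ℝ (Fin 2), 2*((inner ℝ x y : ℝ) * w y) :=
    integral_sub (i0.const_mul (‖x‖^2)) (icross.const_mul 2)
  have e3 : ∫ y : EuclideanSpace ℝ (Fin 2), ‖x‖^2 * w y
      = ‖x‖^2 * ∫ y : EuclideanSpace ℝ (Fin 2), w y := integral_const_mul _ _
  have e4 : ∫ y : EuclideanSpace ℝ (Fin 2), 2*((inner ℝ x y : ℝ) * w y)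
      = 2 * ∫ y : EuclideanSpace ℝ (Fin 2), (inner ℝ x y : ℝ) * w y := integral_const_mul _ _
  rw [hsplit, integral_const_mul, e1, e2, e3, e4, hA, hC]
  rw [hB]
  field_simp
  ring
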